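/- (Truncation for χ²) For all x, y ∈ (0,1], every ε ∈ (0,1], and every t ≥ ln(3/ε): f_χ(x,y) ≥ ∫_{−t}^{t} h(x,y,ω)·κ_χ(ω) dω ≥ f_χ(x,y) − ε. -/

import Mathlib

open Real MeasureTheory

/-- The kernel integrand `h(x,y,ω)`. -/
noncomputable def h (x y ω : ℝ) : ℝ :=
  (Real.sqrt x * Real.cos (ω * Real.log x) - Real.sqrt y * Real.cos (ω * Real.log y)) ^ 2 +
  (Real.sqrt x * Real.sin (ω * Real.log x) - Real.sqrt y * Real.sin (ω * Real.log y)) ^ 2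

/-- Hyperbolic secant. -/
noncomputable def sech (t : ℝ) : ℝ := 2 / (Real.exp t + Real.exp (-t))

/-- The JS kernel density `κ(ω)`. -/
noncomputable def kJ (ω : ℝ) : ℝ := 2 * sech (Real.pi * ω) / (Real.log 4 * (1 + 4 * ω ^ 2))

/-- The χ² kernel density `κ_χ(ω)`. -/
noncomputable def kChi (ω : ℝ) : ℝ := sech (Real.pi * ω)

/-- One-dimensional Jensen–Shannon divergence (with `0·log 0 = 0`, `f_J(0,0) = 0`,
which hold automatically since `Real.log 0 = 0` and `0/0 = 0` in Lean). -/
noncomputable def fJ (x y : ℝ) : ℝ :=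
  x * Real.log (2 * x / (x + y)) + y * Real.log (2 * y / (x + y))

/-- One-dimensional symmetrized χ² divergence (with `f_χ(0,0) = 0`,
which holds automatically since `0/0 = 0` in Lean). -/
noncomputable def fChi (x y : ℝ) : ℝ := (x - y) ^ 2 / (x + y)

/-- One-dimensional Hellinger distance. -/
noncomputable def fH (x y : ℝ) : ℝ := (Real.sqrt x - Real.sqrt y) ^ 2


section ChiAux
open Set


lemma sech_pos (t : ℝ) : 0 < sech t := by
  unfold sech; positivity

lemma continuous_sech : Continuous sech := by
  unfold sech
  exact continuous_const.div (by continuity) (fun t => by positivity)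

lemma sech_le_exp (t : ℝ) : sech t ≤ 2 * Real.exp (-|t|) := by
  unfold sech
  rw [div_le_iff₀ (by positivity)]
  have h : Real.exp |t| ≤ Real.exp t + Real.exp (-t) := by
    rcases abs_cases t with ⟨h1, _⟩ | ⟨h1, _⟩ <;> rw [h1] <;>
      nlinarith [Real.exp_pos t, Real.exp_pos (-t)]
  have h2 : Real.exp (-|t|) * Real.exp (|t|) = 1 := by
    rw [← Real.exp_add]; simp
  nlinarith [Real.exp_pos (-|t|)]

lemma integrable_exp_neg_pi_abs : Integrable (fun ω : ℝ => Real.exp (-(π * |ω|))) := by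
  have h1 : IntegrableOn (fun ω : ℝ => Real.exp (-(π * |ω|))) (Ioi 0) := by
    apply (exp_neg_integrableOn_Ioi 0 Real.pi_pos).congr_fun ?_ measurableSet_Ioi
    intro x hx
    simp [abs_of_pos (mem_Ioi.mp hx)]
  have h2 : IntegrableOn (fun ω : ℝ => Real.exp (-(π * |ω|))) (Iic 0) := by
    have hc : Continuous fun ω : ℝ => Real.exp (-(π * |ω|)) :=
      Real.continuous_exp.comp (continuous_const.mul continuous_abs).neg
    apply (integrableOn_exp_Iic 0).mono' hc.aestronglyMeasurable
    filter_upwards [ae_restrict_mem measurableSet_Iic] with x hx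
    rw [Real.norm_eq_abs, abs_of_pos (Real.exp_pos _)]
    apply Real.exp_le_exp.mpr
    rw [abs_of_nonpos hx]
    nlinarith [Real.pi_gt_three, mul_nonneg (by nlinarith [Real.pi_gt_three] : (0:ℝ) ≤ π - 1) (neg_nonneg.mpr hx)]
  have := h2.union h1
  rwa [Set.Iic_union_Ioi, integrableOn_univ] at this

lemma continuous_sech_pi : Continuous fun ω : ℝ => sech (π * ω) :=
  continuous_sech.comp (continuous_const.mul continuous_id)

lemma integrable_sech_pi : Integrable (fun ω : ℝ => sech (π * ω)) := by
  apply (integrable_exp_neg_pi_abs.const_mul 2).mono' continuous_sech_pi.aestronglyMeasurable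
  refine ae_of_all _ fun ω => ?_
  rw [Real.norm_eq_abs, abs_of_pos (sech_pos _)]
  have := sech_le_exp (π * ω)
  rwa [abs_mul, abs_of_pos Real.pi_pos] at this

lemma integrable_cos_sech (a : ℝ) :
    Integrable (fun ω : ℝ => Real.cos (a * ω) * sech (π * ω)) := by
  have hc : Continuous fun ω : ℝ => Real.cos (a * ω) * sech (π * ω) :=
    (Real.continuous_cos.comp (continuous_const.mul continuous_id)).mul continuous_sech_pi
  apply integrable_sech_pi.mono' hc.aestronglyMeasurable
  refine ae_of_all _ fun ω => ?_
  rw [Real.norm_eq_abs, abs_mul, abs_of_pos (sech_pos _)]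
  nlinarith [Real.abs_cos_le_one (a * ω), sech_pos (π * ω)]

lemma integrable_cexp_sech (a : ℝ) :
    Integrable (fun ω : ℝ => Complex.exp (a * ω * Complex.I) * (sech (π * ω) : ℂ)) := by
  have hc : Continuous fun ω : ℝ => Complex.exp (a * ω * Complex.I) * (sech (π * ω) : ℂ) :=
    (Complex.continuous_exp.comp (by continuity)).mul
      (Complex.continuous_ofReal.comp continuous_sech_pi)
  apply integrable_sech_pi.mono' hc.aestronglyMeasurable
  refine ae_of_all _ fun ω => ?_
  rw [norm_mul]
  have h1 : ‖Complex.exp ((a : ℂ) * ω * Complex.I)‖ = 1 := by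
    rw [show (a : ℂ) * ω * Complex.I = (↑(a * ω) : ℝ) * Complex.I by push_cast; ring]
    exact Complex.norm_exp_ofReal_mul_I _
  rw [h1, one_mul, Complex.norm_real, Real.norm_eq_abs, abs_of_pos (sech_pos _)]

lemma beta_aux {s : ℂ} (hs : s.re = 1/2) :
    ∫ u in Ioi (0:ℝ), (u:ℂ) ^ (s - 1) / (1 + u) = ↑π / Complex.sin (↑π * s) := by
  have himg : (fun t : ℝ => t / (1 - t)) '' (Ioo 0 1) = Ioi 0 := by
    ext u
    constructor
    · rintro ⟨t, ⟨ht0, ht1⟩, rfl⟩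
      exact div_pos ht0 (by linarith)
    · intro hu
      have hu0 : 0 < u := hu
      refine ⟨u / (1 + u), ⟨div_pos hu0 (by linarith), ?_⟩, ?_⟩
      · rw [div_lt_one (by linarith)]; linarith
      · field_simp; ring
  have hderiv : ∀ t ∈ Ioo (0:ℝ) 1,
      HasDerivWithinAt (fun t : ℝ => t / (1 - t)) (((1 - t) ^ 2)⁻¹) (Ioo 0 1) t := by
    intro t ht
    have h1t : 1 - t ≠ 0 := by have := ht.2; intro hc; simp only [mem_Ioo] at ht; linarith [sub_eq_zero.mp hc]
    have hd := (hasDerivAt_id t).div ((hasDerivAt_const t 1).sub (hasDerivAt_id t)) h1t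
    simp only [id_eq, Pi.sub_apply] at hd
    have : (1 * (1 - t) - t * (0 - 1)) / (1 - t) ^ 2 = ((1 - t) ^ 2)⁻¹ := by
      field_simp; ring
    rw [this] at hd
    exact hd.hasDerivWithinAt
  have hinj : InjOn (fun t : ℝ => t / (1 - t)) (Ioo 0 1) := by
    intro p hp q hq hpq
    simp only [mem_Ioo] at hp hq
    have h1p : 1 - p ≠ 0 := by intro hc; linarith [sub_eq_zero.mp hc]
    have h1q : 1 - q ≠ 0 := by intro hc; linarith [sub_eq_zero.mp hc]
    field_simp at hpq
    nlinarith [hpq]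
  rw [← himg, integral_image_eq_integral_abs_deriv_smul measurableSet_Ioo hderiv hinj]
  have hcongr : EqOn (fun t : ℝ => |((1 - t) ^ 2)⁻¹| • ((↑(t / (1 - t)) : ℂ) ^ (s - 1) / (1 + ↑(t / (1 - t)))))
      (fun t : ℝ => (t:ℂ) ^ (s - 1) * ((1:ℂ) - t) ^ ((1 - s) - 1)) (Ioo 0 1) := by
    intro t ht
    obtain ⟨ht0, ht1⟩ := ht
    have h1t : (0:ℝ) < 1 - t := by linarith
    have hQ : ((1:ℂ) - (t:ℂ)) ≠ 0 := by
      rw [show ((1:ℂ) - (t:ℂ)) = ((1 - t : ℝ) : ℂ) by push_cast; ring]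
      exact_mod_cast h1t.ne'
    simp only
    -- rewrite the cpow of the quotient
    have e2 : ((↑(t / (1 - t)) : ℂ)) ^ (s - 1) = (t:ℂ) ^ (s - 1) * ((1:ℂ) - t) ^ (1 - s) := by
      rw [show t / (1 - t) = t * (1 - t)⁻¹ by field_simp, Complex.ofReal_mul,
        Complex.mul_cpow_ofReal_nonneg ht0.le (inv_nonneg.mpr h1t.le), Complex.ofReal_inv,
        show ((1 - t : ℝ) : ℂ) = (1:ℂ) - t by push_cast; ring,
        Complex.inv_cpow _ _ ?harg, ← Complex.cpow_neg, neg_sub]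
      case harg =>
        rw [show ((1:ℂ) - (t:ℂ)) = ((1 - t : ℝ) : ℂ) by push_cast; ring,
          Complex.arg_ofReal_of_nonneg h1t.le]
        exact Real.pi_ne_zero.symm
    have e1 : (1:ℂ) + ↑(t / (1 - t)) = (((1:ℝ) - t)⁻¹ : ℝ) := by
      have : (1:ℝ) + t / (1 - t) = (1 - t)⁻¹ := by field_simp; ring
      calc (1:ℂ) + ↑(t / (1 - t)) = ((1 + t / (1-t) : ℝ) : ℂ) := by push_cast; ring
      _ = _ := by rw [this]
    rw [e2, e1, abs_of_pos (by positivity), Complex.real_smul]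
    rw [show ((1 - s) - 1 : ℂ) = (1 - s) + (-1) by ring, Complex.cpow_add _ _ hQ, Complex.cpow_neg_one]
    push_cast
    rw [show ((1:ℂ) - t)⁻¹ = (((1:ℂ) - t) ^ 2)⁻¹ * ((1:ℂ)-t) by field_simp]
    field_simp
  rw [setIntegral_congr_fun measurableSet_Ioo hcongr]
  have hb : ∫ t in Ioo (0:ℝ) 1, (t:ℂ) ^ (s - 1) * ((1:ℂ) - t) ^ ((1 - s) - 1)
      = Complex.betaIntegral s (1 - s) := by
    rw [Complex.betaIntegral, intervalIntegral.integral_of_le zero_le_one,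
      MeasureTheory.integral_Ioc_eq_integral_Ioo]
  rw [hb]
  have hsre : 0 < s.re := by rw [hs]; norm_num
  have hsre' : 0 < (1 - s).re := by simp [Complex.sub_re, hs]; norm_num
  have hbeta := Complex.Gamma_mul_Gamma_eq_betaIntegral hsre hsre'
  rw [show s + (1 - s) = 1 by ring, Complex.Gamma_one, one_mul] at hbeta
  rw [← hbeta, Complex.Gamma_mul_Gamma_one_sub]

lemma sech_mul_cosh (t : ℝ) : sech t * Real.cosh t = 1 := by
  unfold sech
  rw [Real.cosh_eq]
  have := Real.exp_pos t; have := Real.exp_pos (-t)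
  field_simp

lemma integral_cexp_sech (a : ℝ) :
    ∫ ω : ℝ, Complex.exp (a * ω * Complex.I) * (sech (π * ω) : ℂ) = (sech (a/2) : ℂ) := by
  have hπ : (π:ℂ) ≠ 0 := by exact_mod_cast Real.pi_ne_zero
  set s : ℂ := 1/2 + (↑(a/(2*π)) : ℂ) * Complex.I with hs_def
  have hsre : s.re = 1/2 := by simp [hs_def, Complex.mul_re, Complex.div_im, Complex.div_re]
  have key := beta_aux hsre
  have himg : (fun ω : ℝ => Real.exp (2*π*ω)) '' univ = Ioi 0 := by
    rw [image_univ]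
    ext u
    simp only [mem_range, mem_Ioi]
    constructor
    · rintro ⟨ω, rfl⟩; exact Real.exp_pos _
    · intro hu
      refine ⟨Real.log u / (2*π), ?_⟩
      rw [show 2*π*(Real.log u / (2*π)) = Real.log u by field_simp, Real.exp_log hu]
  have hderiv : ∀ ω ∈ (univ : Set ℝ),
      HasDerivWithinAt (fun ω : ℝ => Real.exp (2*π*ω)) (2*π*Real.exp (2*π*ω)) univ ω := by
    intro ω _
    have h1 : HasDerivAt (fun ω : ℝ => 2*π*ω) (2*π) ω := by
      simpa using (hasDerivAt_id ω).const_mul (2*π)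
    have h2 : Real.exp (2*π*ω) * (2*π) = 2*π*Real.exp (2*π*ω) := by ring
    exact h2 ▸ ((Real.hasDerivAt_exp (2*π*ω)).comp ω h1).hasDerivWithinAt
  have hinj : InjOn (fun ω : ℝ => Real.exp (2*π*ω)) univ := by
    intro p _ q _ hpq
    have := Real.exp_injective hpq
    exact mul_left_cancel₀ (by positivity : (2:ℝ)*π ≠ 0) this
  rw [← himg, integral_image_eq_integral_abs_deriv_smul MeasurableSet.univ hderiv hinj,
    Measure.restrict_univ] at key
  have hpt : (fun ω : ℝ => |2*π*Real.exp (2*π*ω)| •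
      ((↑(Real.exp (2*π*ω)) : ℂ) ^ (s - 1) / (1 + ↑(Real.exp (2*π*ω)))))
      = fun ω : ℝ => (π:ℂ) * (Complex.exp (a * ω * Complex.I) * (sech (π * ω) : ℂ)) := by
    funext ω
    have habs : |2*π*Real.exp (2*π*ω)| = 2*π*Real.exp (2*π*ω) := abs_of_pos (by positivity)
    have hexp : (↑(Real.exp (2*π*ω)) : ℂ) ^ (s - 1)
        = Complex.exp (↑a * ↑ω * Complex.I) * ↑(Real.exp (-(π*ω))) := by
      rw [Complex.ofReal_exp, Complex.cpow_def_of_ne_zero (Complex.exp_ne_zero _),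
        Complex.log_exp (by rw [Complex.ofReal_im]; linarith [Real.pi_pos])
          (by rw [Complex.ofReal_im]; exact Real.pi_nonneg)]
      rw [Complex.ofReal_exp, ← Complex.exp_add]
      congr 1
      rw [hs_def]
      push_cast
      field_simp
      ring
    rw [habs, Complex.real_smul, hexp]
    have hreal : 2*π*Real.exp (2*π*ω) * Real.exp (-(π*ω)) / (1 + Real.exp (2*π*ω))
        = π * (2 / (Real.exp (π*ω) + Real.exp (-(π*ω)))) := by
      have e1 : Real.exp (2*π*ω) = Real.exp (π*ω) * Real.exp (π*ω) := by
        rw [← Real.exp_add]; ring_nf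
      have e2 : Real.exp (π*ω) * Real.exp (-(π*ω)) = 1 := by
        rw [← Real.exp_add]; simp
      have h1 : (0:ℝ) < 1 + Real.exp (π*ω) * Real.exp (π*ω) := by positivity
      have h2 : (0:ℝ) < Real.exp (π*ω) + Real.exp (-(π*ω)) := by positivity
      rw [e1, show π * (2 / (Real.exp (π*ω) + Real.exp (-(π*ω))))
          = 2*π / (Real.exp (π*ω) + Real.exp (-(π*ω))) by ring,
        div_eq_div_iff h1.ne' h2.ne']
      linear_combination (2*π*(Real.exp (π*ω)*Real.exp (π*ω)
        + Real.exp (π*ω)*Real.exp (-(π*ω)) + 1)) * e2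
    unfold sech
    rw [show (↑π : ℂ) * (Complex.exp (↑a*↑ω*Complex.I) * ↑(2 / (Real.exp (π*ω) + Real.exp (-(π*ω)))))
        = ↑(π * (2 / (Real.exp (π*ω) + Real.exp (-(π*ω))))) * Complex.exp (↑a*↑ω*Complex.I) by
      push_cast; ring]
    rw [← hreal]
    have hden : ((1:ℂ) + ↑(Real.exp (2*π*ω))) ≠ 0 := by
      rw [show ((1:ℂ) + ↑(Real.exp (2*π*ω))) = ↑(1 + Real.exp (2*π*ω)) by push_cast; ring]
      exact_mod_cast (by positivity : (0:ℝ) < 1 + Real.exp (2*π*ω)).ne'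
    push_cast
    field_simp
  rw [hpt, MeasureTheory.integral_const_mul] at key
  -- identify sin (π s)
  have hπs : (↑π : ℂ) * s = ↑π/2 + ↑(a/2) * Complex.I := by
    rw [hs_def]; push_cast; field_simp
  have hsin : Complex.sin (↑π * s) = ↑(Real.cosh (a/2)) := by
    rw [hπs, Complex.sin_add, Complex.sin_pi_div_two, Complex.cos_pi_div_two,
      Complex.cos_mul_I, Complex.ofReal_cosh]
    ring
  have hcosh : (↑(Real.cosh (a/2)) : ℂ) ≠ 0 := by
    exact_mod_cast (Real.cosh_pos (x := a/2)).ne'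
  have hfin : (↑π : ℂ) / Complex.sin (↑π * s) = ↑π * ↑(sech (a/2)) := by
    rw [hsin, div_eq_iff hcosh, mul_assoc, ← Complex.ofReal_mul, sech_mul_cosh,
      Complex.ofReal_one, mul_one]
  rw [hfin] at key
  exact mul_left_cancel₀ hπ key

lemma integral_cos_sech (a : ℝ) :
    ∫ ω : ℝ, Real.cos (a * ω) * sech (π * ω) = sech (a/2) := by
  have hInt := integrable_cexp_sech a
  have h1 : (fun ω : ℝ => Real.cos (a * ω) * sech (π * ω))
      = fun ω : ℝ => (Complex.exp (a * ω * Complex.I) * (sech (π * ω) : ℂ)).re := by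
    funext ω
    rw [Complex.mul_re, Complex.ofReal_re, Complex.ofReal_im, mul_zero, sub_zero]
    congr 1
    rw [show (↑a * ↑ω * Complex.I : ℂ) = (↑(a * ω) : ℝ) * Complex.I by push_cast; ring,
      Complex.exp_ofReal_mul_I_re]
  have h2 := integral_re hInt
  simp only [RCLike.re_to_complex] at h2
  rw [h1, h2, integral_cexp_sech, Complex.ofReal_re]

lemma h_expand (x y : ℝ) (hx : 0 ≤ x) (hy : 0 ≤ y) (ω : ℝ) :
    h x y ω = x + y - 2 * Real.sqrt x * Real.sqrt y * Real.cos ((Real.log x - Real.log y) * ω) := by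
  unfold h
  have hx2 : Real.sqrt x ^ 2 = x := Real.sq_sqrt hx
  have hy2 : Real.sqrt y ^ 2 = y := Real.sq_sqrt hy
  rw [show (Real.log x - Real.log y) * ω = ω * Real.log x - ω * Real.log y by ring, Real.cos_sub]
  have p1 := Real.sin_sq_add_cos_sq (ω * Real.log x)
  have p2 := Real.sin_sq_add_cos_sq (ω * Real.log y)
  linear_combination (Real.sqrt x)^2 * p1 + (Real.sqrt y)^2 * p2 + hx2 + hy2

lemma integral_sech_pi : ∫ ω : ℝ, sech (π * ω) = 1 := by
  have := integral_cos_sech 0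
  simp only [zero_mul, Real.cos_zero, one_mul] at this
  rw [this]
  unfold sech
  norm_num

lemma sech_half_log (x y : ℝ) (hx : 0 < x) (hy : 0 < y) :
    Real.sqrt x * Real.sqrt y * sech ((Real.log x - Real.log y)/2) = 2*x*y/(x+y) := by
  have hp : 0 < Real.sqrt x := Real.sqrt_pos.mpr hx
  have hq : 0 < Real.sqrt y := Real.sqrt_pos.mpr hy
  have hp2 : Real.sqrt x ^ 2 = x := Real.sq_sqrt hx.le
  have hq2 : Real.sqrt y ^ 2 = y := Real.sq_sqrt hy.le
  have hlx : Real.log x = 2 * Real.log (Real.sqrt x) := by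
    rw [Real.log_sqrt hx.le]; ring
  have hly : Real.log y = 2 * Real.log (Real.sqrt y) := by
    rw [Real.log_sqrt hy.le]; ring
  have he : Real.exp ((Real.log x - Real.log y)/2) = Real.sqrt x / Real.sqrt y := by
    rw [hlx, hly, show (2 * Real.log (Real.sqrt x) - 2 * Real.log (Real.sqrt y))/2
      = Real.log (Real.sqrt x) - Real.log (Real.sqrt y) by ring,
      Real.exp_sub, Real.exp_log hp, Real.exp_log hq]
  unfold sech
  rw [Real.exp_neg, he, inv_div, div_add_div _ _ hq.ne' hp.ne', div_div_eq_mul_div,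
    show Real.sqrt x * Real.sqrt y * (2 * (Real.sqrt y * Real.sqrt x) / (Real.sqrt x * Real.sqrt x + Real.sqrt y * Real.sqrt y))
      = 2 * ((Real.sqrt x * Real.sqrt x) * (Real.sqrt y * Real.sqrt y)) / (Real.sqrt x * Real.sqrt x + Real.sqrt y * Real.sqrt y) by ring,
    Real.mul_self_sqrt hx.le, Real.mul_self_sqrt hy.le]
  ring

lemma integral_full (x y : ℝ) (hx : 0 < x) (hy : 0 < y) :
    ∫ ω : ℝ, h x y ω * kChi ω = fChi x y := by
  have hrw : (fun ω : ℝ => h x y ω * kChi ω)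
      = fun ω : ℝ => (x+y) * sech (π*ω)
        - (2*Real.sqrt x*Real.sqrt y) * (Real.cos ((Real.log x - Real.log y)*ω) * sech (π*ω)) := by
    funext ω
    unfold kChi; rw [h_expand x y hx.le hy.le]
    ring
  rw [hrw, integral_sub (integrable_sech_pi.const_mul (x+y))
    ((integrable_cos_sech (Real.log x - Real.log y)).const_mul _),
    MeasureTheory.integral_const_mul, MeasureTheory.integral_const_mul,
    integral_sech_pi, integral_cos_sech]
  have hs := sech_half_log x y hx hy
  have hxy : x + y ≠ 0 := by positivity
  have h4 : 2*Real.sqrt x*Real.sqrt y*sech ((Real.log x - Real.log y)/2) = 4*x*y/(x+y) := by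
    rw [show 2*Real.sqrt x*Real.sqrt y*sech ((Real.log x - Real.log y)/2)
      = 2*(Real.sqrt x*Real.sqrt y*sech ((Real.log x - Real.log y)/2)) by ring, hs]
    ring
  rw [mul_one, h4]
  unfold fChi
  field_simp
  ring

lemma integrable_hk (x y : ℝ) (hx : 0 ≤ x) (hy : 0 ≤ y) :
    Integrable (fun ω : ℝ => h x y ω * kChi ω) := by
  have hrw : (fun ω : ℝ => h x y ω * kChi ω)
      = fun ω : ℝ => (x+y) * sech (π*ω)
        - (2*Real.sqrt x*Real.sqrt y) * (Real.cos ((Real.log x - Real.log y)*ω) * sech (π*ω)) := by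
    funext ω
    unfold kChi; rw [h_expand x y hx hy]
    ring
  rw [hrw]
  exact (integrable_sech_pi.const_mul (x+y)).sub
    ((integrable_cos_sech (Real.log x - Real.log y)).const_mul _)

lemma hk_nonneg (x y ω : ℝ) : 0 ≤ h x y ω * kChi ω := by
  have h1 : 0 ≤ h x y ω := by unfold h; positivity
  exact mul_nonneg h1 (sech_pos _).le

lemma hk_le (x y : ℝ) (hx : x ∈ Ioc (0:ℝ) 1) (hy : y ∈ Ioc (0:ℝ) 1) (ω : ℝ) :
    h x y ω * kChi ω ≤ 8 * Real.exp (-(π * |ω|)) := by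
  have hh : h x y ω ≤ 4 := by
    rw [h_expand x y hx.1.le hy.1.le]
    have hsx : Real.sqrt x ≤ 1 := by
      rw [show (1:ℝ) = Real.sqrt 1 by simp]; exact Real.sqrt_le_sqrt hx.2
    have hsy : Real.sqrt y ≤ 1 := by
      rw [show (1:ℝ) = Real.sqrt 1 by simp]; exact Real.sqrt_le_sqrt hy.2
    have hc := Real.neg_one_le_cos ((Real.log x - Real.log y) * ω)
    have hpq : Real.sqrt x * Real.sqrt y ≤ 1 := by
      nlinarith [Real.sqrt_nonneg x, Real.sqrt_nonneg y]
    have hkey : 0 ≤ Real.sqrt x * Real.sqrt y * (1 + Real.cos ((Real.log x - Real.log y) * ω)) :=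
      mul_nonneg (mul_nonneg (Real.sqrt_nonneg x) (Real.sqrt_nonneg y)) (by linarith)
    nlinarith [hx.2, hy.2]
  have hk2 : kChi ω ≤ 2 * Real.exp (-(π * |ω|)) := by
    unfold kChi
    have := sech_le_exp (π * ω)
    rwa [abs_mul, abs_of_pos Real.pi_pos] at this
  have h0 : 0 ≤ h x y ω := by unfold h; positivity
  nlinarith [sech_pos (π * ω), mul_le_mul hh hk2 (by unfold kChi; exact (sech_pos _).le) (by norm_num : (0:ℝ) ≤ 4)]

lemma integral_exp_tail (t : ℝ) : ∫ ω in Ioi t, 8 * Real.exp (-(π * ω)) = 8 / π * Real.exp (-(π*t)) := by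
  have h1 : (fun ω : ℝ => 8 * Real.exp (-(π * ω))) = fun ω : ℝ => (fun u => 8 * Real.exp (-u)) (π * ω) := by
    funext ω; simp
  rw [h1, integral_comp_mul_left_Ioi (fun u => 8 * Real.exp (-u)) t Real.pi_pos,
    MeasureTheory.integral_const_mul, integral_exp_neg_Ioi]
  rw [smul_eq_mul]
  ring

lemma tail_bound (x y t : ℝ) (hx : x ∈ Ioc (0:ℝ) 1) (hy : y ∈ Ioc (0:ℝ) 1) (ht : 0 < t) :
    ∫ ω in (Ioc (-t) t)ᶜ, h x y ω * kChi ω ≤ 16 / π * Real.exp (-(π*t)) := by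
  have hInt := integrable_hk x y hx.1.le hy.1.le
  have hcompl : (Ioc (-t) t)ᶜ = Iic (-t) ∪ Ioi t := by
    ext ω
    simp only [mem_compl_iff, mem_Ioc, not_and, not_le, mem_union, mem_Iic, mem_Ioi]
    constructor
    · intro hcases
      by_cases hω : -t < ω
      · exact Or.inr (hcases hω)
      · exact Or.inl (le_of_not_gt hω)
    · intro hcases h2
      rcases hcases with hcase | hcase
      · linarith
      · exact hcase
  rw [hcompl,
    setIntegral_union (by rw [Set.disjoint_left]; intro a ha hb; simp at ha hb; linarith)
      measurableSet_Ioi hInt.integrableOn hInt.integrableOn]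
  have hIoi : ∫ ω in Ioi t, h x y ω * kChi ω ≤ 8 / π * Real.exp (-(π*t)) := by
    have hbig : IntegrableOn (fun ω : ℝ => 8 * Real.exp (-(π * ω))) (Ioi t) := by
      have := (exp_neg_integrableOn_Ioi t Real.pi_pos).const_mul 8
      simpa [neg_mul, IntegrableOn] using this
    have := setIntegral_mono_on hInt.integrableOn hbig measurableSet_Ioi (fun ω hω => by
      have hω0 : 0 < ω := lt_trans ht hω
      have := hk_le x y hx hy ω
      rwa [abs_of_pos hω0] at this)
    rwa [integral_exp_tail] at this
  have hIic : ∫ ω in Iic (-t), h x y ω * kChi ω ≤ 8 / π * Real.exp (-(π*t)) := by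
    have hbig : IntegrableOn (fun ω : ℝ => 8 * Real.exp (π * ω)) (Iic (-t)) := by
      have hc : Continuous fun ω : ℝ => 8 * Real.exp (π * ω) := by continuity
      apply ((integrableOn_exp_Iic (-t)).const_mul 8).mono' hc.aestronglyMeasurable
      filter_upwards [ae_restrict_mem measurableSet_Iic] with ω hω
      rw [Real.norm_eq_abs, abs_of_pos (by positivity)]
      have hω0 : ω ≤ 0 := le_trans hω (by linarith)
      have : π * ω ≤ ω := by nlinarith [Real.pi_gt_three]
      nlinarith [Real.exp_le_exp.mpr this, Real.exp_pos ω]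
    have hmono := setIntegral_mono_on hInt.integrableOn hbig measurableSet_Iic (fun ω hω => by
      have hω0 : ω < 0 := lt_of_le_of_lt hω (by linarith)
      have := hk_le x y hx hy ω
      rwa [abs_of_neg hω0, show -(π * -ω) = π * ω by ring] at this)
    have hval : ∫ ω in Iic (-t), 8 * Real.exp (π * ω) = 8 / π * Real.exp (-(π*t)) := by
      have h1 : (fun ω : ℝ => 8 * Real.exp (π * ω)) = fun ω : ℝ => (fun u => 8 * Real.exp (-(π * u))) (-ω) := by
        funext ω; simp
      rw [h1, integral_comp_neg_Iic (-t) (fun u => 8 * Real.exp (-(π * u))), neg_neg,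
        integral_exp_tail]
    linarith [hmono, hval.le, hval.ge]
  have hsum : 8 / π * Real.exp (-(π*t)) + 8 / π * Real.exp (-(π*t)) = 16 / π * Real.exp (-(π*t)) := by
    ring
  linarith

end ChiAux

/-- Truncation for χ². -/
theorem chiSq_truncation :
    ∀ x ∈ Set.Ioc (0 : ℝ) 1, ∀ y ∈ Set.Ioc (0 : ℝ) 1, ∀ ε ∈ Set.Ioc (0 : ℝ) 1,
      ∀ t : ℝ, Real.log (3 / ε) ≤ t →
        fChi x y ≥ (∫ ω in (-t)..t, h x y ω * kChi ω) ∧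
        (∫ ω in (-t)..t, h x y ω * kChi ω) ≥ fChi x y - ε := by
  intro x hx y hy ε hε t ht
  have hx0 := hx.1
  have hy0 := hy.1
  have hε0 := hε.1
  have h3ε : (1:ℝ) < 3/ε := by rw [lt_div_iff₀ hε0]; linarith [hε.2]
  have hlog : 0 < Real.log (3/ε) := Real.log_pos h3ε
  have ht0 : 0 < t := lt_of_lt_of_le hlog ht
  have hInt := integrable_hk x y hx0.le hy0.le
  have hfull := integral_full x y hx0 hy0
  rw [intervalIntegral.integral_of_le (by linarith : -t ≤ t)]
  have hnn : 0 ≤ᵐ[volume] fun ω : ℝ => h x y ω * kChi ω :=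
    Filter.Eventually.of_forall fun ω => hk_nonneg x y ω
  constructor
  · rw [ge_iff_le, ← hfull]
    exact setIntegral_le_integral hInt hnn
  · rw [ge_iff_le]
    have hsplit := MeasureTheory.integral_add_compl (measurableSet_Ioc (a := -t) (b := t)) hInt
    have htail := tail_bound x y t hx hy ht0
    have heps : 16 / π * Real.exp (-(π*t)) ≤ ε := by
      have h1 : Real.exp (-(π*t)) ≤ Real.exp (-(3*Real.log (3/ε))) := by
        apply Real.exp_le_exp.mpr
        have hπt : 3 * Real.log (3/ε) ≤ π * t := by nlinarith [Real.pi_gt_three, hlog, ht, ht0]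
        linarith
      have h2 : Real.exp (-(3*Real.log (3/ε))) = (ε/3)^3 := by
        rw [show 3*Real.log (3/ε) = Real.log ((3/ε)^3) by rw [Real.log_pow]; push_cast; ring,
          Real.exp_neg, Real.exp_log (by positivity), ← inv_pow, inv_div]
      have h16 : 16 / π ≤ 16 / 3 := by
        rw [div_le_div_iff₀ Real.pi_pos (by norm_num)]
        nlinarith [Real.pi_gt_three]
      calc 16 / π * Real.exp (-(π*t)) ≤ 16/3 * (ε/3)^3 :=
        mul_le_mul h16 (h1.trans h2.le) (Real.exp_pos _).le (by norm_num)
      _ ≤ ε := by nlinarith [hε.2, hε0, sq_nonneg ε, mul_nonneg hε0.le hε0.le]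
    linarith [hsplit, htail, heps, hfull]
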